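/- If λ = 1, then the only ℓ²(ℤ) solution f of 𝓛^{pr}f = f is f = 0; that is, 1 is not an eigenvalue of 𝓛^{pr}. -/

import Mathlib

open Classical in
/-- Pointwise action of the projected normalized Laplacian `𝓛^{pr}` on `ℤ`. -/
noncomputable def lprFunC (g : ℤ → ℂ) (m : ℤ) : ℂ :=
  if 0 ≤ m then
    if Even m then
      g m - (1/2) * g (m - 1) - ((1 / (2 * Real.sqrt 2) : ℝ) : ℂ) * g (m + 1)
    else
      (3/4) * g m - ((1 / (2 * Real.sqrt 2) : ℝ) : ℂ) * g (m - 1) - (1/2) * g (m + 1)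
  else
    if Even (-m - 1) then
      g m - (1/2) * g (m + 1) - ((1 / (2 * Real.sqrt 2) : ℝ) : ℂ) * g (m - 1)
    else
      (3/4) * g m - ((1 / (2 * Real.sqrt 2) : ℝ) : ℂ) * g (m + 1) - (1/2) * g (m - 1)

private lemma sqrtC_ne : ((Real.sqrt 2 : ℝ) : ℂ) ≠ 0 := by
  exact_mod_cast (Real.sqrt_pos.mpr (by norm_num)).ne'

private lemma lemA (f : ℤ → ℂ) (heig : ∀ m : ℤ, lprFunC f m = f m)
    (m : ℤ) (hm : 0 ≤ m) (hev : Even m) :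
    f (m + 1) = -(Real.sqrt 2 : ℂ) * f (m - 1) := by
  have h := heig m
  unfold lprFunC at h
  rw [if_pos hm, if_pos hev] at h
  have hS := sqrtC_ne
  push_cast at h
  field_simp at h
  linear_combination (-1 : ℂ) * h

private lemma lemB (f : ℤ → ℂ) (heig : ∀ m : ℤ, lprFunC f m = f m)
    (m : ℤ) (hm : 0 ≤ m) (hev : ¬ Even m) (h0 : f m = 0) (h1 : f (m - 1) = 0) :
    f (m + 1) = 0 := by
  have h := heig m
  unfold lprFunC at h
  rw [if_pos hm, if_neg hev] at h
  rw [h0, h1] at h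
  have hS := sqrtC_ne
  push_cast at h
  linear_combination (-2 : ℂ) * h

private lemma lemC (f : ℤ → ℂ) (heig : ∀ m : ℤ, lprFunC f m = f m)
    (m : ℤ) (hm : m < 0) (hev : Even (-m - 1)) :
    f (m - 1) = -(Real.sqrt 2 : ℂ) * f (m + 1) := by
  have h := heig m
  unfold lprFunC at h
  rw [if_neg (by omega), if_pos hev] at h
  have hS := sqrtC_ne
  push_cast at h
  field_simp at h
  linear_combination (-1 : ℂ) * h

private lemma lemD (f : ℤ → ℂ) (heig : ∀ m : ℤ, lprFunC f m = f m)
    (m : ℤ) (hm : m < 0) (hev : ¬ Even (-m - 1)) (h0 : f m = 0) (h1 : f (m + 1) = 0) :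
    f (m - 1) = 0 := by
  have h := heig m
  unfold lprFunC at h
  rw [if_neg (by omega), if_neg hev] at h
  rw [h0, h1] at h
  have hS := sqrtC_ne
  push_cast at h
  linear_combination (-2 : ℂ) * h

private lemma keyzero (f : ℤ → ℂ) (hf : Memℓp f 2) (e : ℕ → ℤ)
    (he : Function.Injective e) (c : ℂ)
    (h : ∀ k : ℕ, f (e k) = (-(Real.sqrt 2 : ℂ)) ^ (k + 1) * c) : c = 0 := by
  by_contra hc
  have hsum : Summable fun m : ℤ => ‖f m‖ ^ ((2 : ENNReal).toReal) :=
    hf.summable (by norm_num)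
  have hsum2 := hsum.comp_injective he
  have hterm : ∀ k : ℕ, ‖f (e k)‖ ^ ((2 : ENNReal).toReal) = 2 ^ (k + 1) * ‖c‖ ^ 2 := by
    intro k
    have h2 : ((2 : ENNReal).toReal) = ((2 : ℕ) : ℝ) := by norm_num
    rw [h k, h2, Real.rpow_natCast]
    rw [norm_mul, norm_pow, norm_neg]
    have : ‖(Real.sqrt 2 : ℂ)‖ = Real.sqrt 2 := by
      rw [Complex.norm_real, Real.norm_eq_abs, abs_of_nonneg (Real.sqrt_nonneg 2)]
    rw [this, mul_pow, ← pow_mul, mul_comm (k+1) 2, pow_mul, Real.sq_sqrt (by norm_num)]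
  have hlim : Filter.Tendsto (fun k : ℕ => (2 : ℝ) ^ (k + 1) * ‖c‖ ^ 2)
      Filter.atTop (nhds 0) :=
    hsum2.tendsto_atTop_zero.congr fun k => hterm k
  have hlb : ∀ k : ℕ, 2 * ‖c‖ ^ 2 ≤ (2 : ℝ) ^ (k + 1) * ‖c‖ ^ 2 := by
    intro k
    have h1 : (2 : ℝ) ≤ 2 ^ (k + 1) := by
      calc (2:ℝ) = 2 ^ 1 := (pow_one 2).symm
      _ ≤ 2 ^ (k + 1) := pow_le_pow_right₀ one_le_two (by omega)
    nlinarith [sq_nonneg ‖c‖]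
  have := ge_of_tendsto' hlim hlb
  have hc2 : 0 < ‖c‖ ^ 2 := pow_pos (norm_pos_iff.mpr hc) 2
  nlinarith

/-- `1` is not an eigenvalue of `𝓛^{pr}` on `ℓ²(ℤ)`. -/
theorem one_not_eigenvalue (f : ℤ → ℂ) (hf : Memℓp f 2)
    (heig : ∀ m : ℤ, lprFunC f m = f m) : f = 0 := by
  set S : ℂ := (Real.sqrt 2 : ℂ) with hSdef
  -- odd positive entries grow
  have hodd : ∀ k : ℕ, f (2 * (k : ℤ) + 1) = (-S) ^ (k + 1) * f (-1) := by
    intro k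
    induction k with
    | zero =>
      have h := lemA f heig 0 le_rfl Even.zero
      norm_num at h ⊢
      exact h
    | succ k ih =>
      have h := lemA f heig (2 * (k : ℤ) + 2) (by omega) ⟨(k : ℤ) + 1, by ring⟩
      have e1 : 2 * ((k : ℤ) + 1) + 1 = 2 * (k : ℤ) + 2 + 1 := by ring
      have e2 : 2 * (k : ℤ) + 2 - 1 = 2 * (k : ℤ) + 1 := by ring
      push_cast
      rw [e1, h, e2, ih]
      ring
  -- negative even entries grow
  have hneg : ∀ k : ℕ, f (-(2 * (k : ℤ)) - 2) = (-S) ^ (k + 1) * f 0 := by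
    intro k
    induction k with
    | zero =>
      have h := lemC f heig (-1) (by norm_num) (by norm_num)
      norm_num at h ⊢
      exact h
    | succ k ih =>
      have h := lemC f heig (-(2 * (k : ℤ)) - 3) (by omega)
        (by rw [show -(-(2 * (k : ℤ)) - 3) - 1 = 2 * (k : ℤ) + 2 by ring]
            exact ⟨(k : ℤ) + 1, by ring⟩)
      have e1 : -(2 * ((k : ℤ) + 1)) - 2 = -(2 * (k : ℤ)) - 3 - 1 := by ring
      have e2 : -(2 * (k : ℤ)) - 3 + 1 = -(2 * (k : ℤ)) - 2 := by ring
      push_cast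
      rw [e1, h, e2, ih]
      ring
  have hinj1 : Function.Injective fun k : ℕ => 2 * (k : ℤ) + 1 := by
    intro a b hab; simpa using hab
  have hinj2 : Function.Injective fun k : ℕ => -(2 * (k : ℤ)) - 2 := by
    intro a b hab; simp at hab; omega
  have hm1 : f (-1) = 0 := keyzero f hf _ hinj1 _ hodd
  have h0 : f 0 = 0 := keyzero f hf _ hinj2 _ hneg
  -- all nonnegative entries vanish
  have hpos : ∀ n : ℕ, f (n : ℤ) = 0 ∧ f ((n : ℤ) - 1) = 0 := by
    intro n
    induction n with
    | zero => exact ⟨h0, by simpa using hm1⟩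
    | succ n ih =>
      refine ⟨?_, by push_cast; simpa using ih.1⟩
      by_cases hev : Even (n : ℤ)
      · have h := lemA f heig n (Int.natCast_nonneg n) hev
        push_cast
        rw [h, ih.2, mul_zero]
      · have h := lemB f heig n (Int.natCast_nonneg n) hev ih.1 ih.2
        push_cast
        exact h
  -- all nonpositive entries vanish
  have hnegall : ∀ n : ℕ, f (-(n : ℤ)) = 0 ∧ f (-(n : ℤ) + 1) = 0 := by
    intro n
    induction n with
    | zero => exact ⟨h0, by simpa using (hpos 1).1⟩
    | succ n ih =>
      refine ⟨?_, by push_cast; simpa using ih.1⟩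
      rcases n with _ | k
      · simpa using hm1
      · have ih1 : f (-(k : ℤ) - 1) = 0 := by
          have := ih.1; push_cast at this; rw [show -(k : ℤ) - 1 = -((k:ℤ)+1) by ring]
          exact this
        have ih2 : f (-(k : ℤ)) = 0 := by
          have := ih.2; push_cast at this
          rw [show -(k : ℤ) = -((k:ℤ)+1) + 1 by ring]; exact this
        have hgoal : f ((-(k : ℤ) - 1) - 1) = 0 := by
          by_cases hev : Even (k : ℤ)
          · have h := lemC f heig (-(k : ℤ) - 1) (by omega)
              (by rw [show -(-(k : ℤ) - 1) - 1 = (k : ℤ) by ring]; exact hev)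
            rw [h, show -(k : ℤ) - 1 + 1 = -(k : ℤ) by ring, ih2, mul_zero]
          · exact lemD f heig (-(k : ℤ) - 1) (by omega)
              (by rw [show -(-(k : ℤ) - 1) - 1 = (k : ℤ) by ring]; exact hev)
              ih1 (by rw [show -(k : ℤ) - 1 + 1 = -(k : ℤ) by ring]; exact ih2)
        push_cast
        rw [show -((k : ℤ) + 1 + 1) = -(k : ℤ) - 1 - 1 by ring]
        exact hgoal
  funext m
  show f m = 0
  rcases Int.eq_nat_or_neg m with ⟨n, rfl | rfl⟩
  · exact (hpos n).1
  · exact (hnegall n).1
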